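/- arXiv:1510.00782 — 5 statements merged into one kernel-verified Lean document; each statement's English description precedes it below -/
import Mathlib

section
/- For every integer n ≥ 1 and every 0 < φ < π/2, the normalized measure of a spherical cap of angular radius φ on the sphere S^n satisfies Ω_n(φ) > sin^n(φ) / √(2π(n+1)). -/
open Set Metric MeasureTheory ProbabilityTheory InnerProductGeometry Real


noncomputable section

/-- `ℝ^n` as a Euclidean space. -/
abbrev Euc (n : ℕ) : Type := EuclideanSpace ℝ (Fin n)

/-- A direction `u` illuminates the body `K` at the boundary point `b` if the ray
`{b + λ • u : λ > 0}` meets the interior of `K`. -/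
def Illuminates {n : ℕ} (K : Set (Euc n)) (u b : Euc n) : Prop :=
  ∃ lam : ℝ, 0 < lam ∧ b + lam • u ∈ interior K

/-- A set `A` of directions illuminates `K` if every boundary point of `K` is illuminated
by some direction in `A`. -/
def IlluminatedBy {n : ℕ} (K A : Set (Euc n)) : Prop :=
  ∀ b ∈ frontier K, ∃ u ∈ A, Illuminates K u b

/-- The illumination number of `K`: the minimum number of directions (unit vectors)
that together illuminate every boundary point of `K`. -/
def illumNumber {n : ℕ} (K : Set (Euc n)) : ℕ :=
  sInf {m | ∃ A : Finset (Euc n), (A : Set (Euc n)) ⊆ Metric.sphere (0 : Euc n) 1 ∧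
    IlluminatedBy K (A : Set (Euc n)) ∧ A.card = m}

/-- The normalized (Haar, i.e. rotation-invariant probability) measure on the unit
sphere `S^n ⊆ ℝ^{n+1}`. -/
def sphereHaar (n : ℕ) : Measure ↥(Metric.sphere (0 : Euc (n+1)) 1) :=
  ((volume : Measure (Euc (n+1))).toSphere Set.univ)⁻¹ • (volume : Measure (Euc (n+1))).toSphere

/-- `Ω_n φ`: the normalized Haar measure of a spherical cap of angular radius `φ` on `S^n`. -/
def Omega (n : ℕ) (φ : ℝ) : ℝ :=
  (sphereHaar n {v | InnerProductGeometry.angle (v : Euc (n+1))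
      (EuclideanSpace.single 0 1) ≤ φ}).toReal


section Aux
open Pointwise ENNReal
set_option maxHeartbeats 1000000


lemma pi_sumsq_vol (n : ℕ) (hn : 1 ≤ n) {r : ℝ} (hr : 0 ≤ r) :
    (volume : Measure (Fin n → ℝ)) {y | ∑ j, y j ^ 2 < r ^ 2} =
      ENNReal.ofReal (r ^ n * (Real.sqrt π ^ n / Real.Gamma (n / 2 + 1))) := by
  haveI : Nonempty (Fin n) := ⟨⟨0, hn⟩⟩
  have hmeas : MeasurableSet {y : Fin n → ℝ | ∑ j, y j ^ 2 < r ^ 2} := by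
    apply measurableSet_lt (by measurability) measurable_const
  rw [← (EuclideanSpace.volume_preserving_symm_measurableEquiv_toLp (Fin n)).measure_preimage
    hmeas.nullMeasurableSet]
  have hpre : (MeasurableEquiv.toLp 2 (Fin n → ℝ)).symm ⁻¹' {y | ∑ j, y j ^ 2 < r ^ 2}
      = Metric.ball (0 : Euc n) r := by
    rw [EuclideanSpace.ball_zero_eq _ hr]
    rfl
  rw [hpre, EuclideanSpace.volume_ball, Fintype.card_fin, ← ENNReal.ofReal_pow hr,
    ← ENNReal.ofReal_mul (by positivity)]

variable {n : ℕ} {φ : ℝ}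


lemma inner_single (x : Euc (n+1)) :
    @inner ℝ _ _ x (EuclideanSpace.single 0 1) = x 0 := by
  simp [EuclideanSpace.inner_single_right]

lemma angle_le_iff (hφ0 : 0 < φ) (hφ1 : φ < π/2) (x : Euc (n+1)) (hx : ‖x‖ = 1) :
    InnerProductGeometry.angle x (EuclideanSpace.single 0 1) ≤ φ ↔ Real.cos φ ≤ x 0 := by
  have hnorm : ‖(EuclideanSpace.single 0 1 : Euc (n+1))‖ = 1 := by
    simp
  rw [InnerProductGeometry.angle, inner_single, hx, hnorm, mul_one, div_one]
  constructor
  · intro h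
    have h1 : |x 0| ≤ 1 := by
      have := abs_real_inner_le_norm x (EuclideanSpace.single 0 1 : Euc (n+1))
      rwa [inner_single, hx, hnorm, mul_one] at this
    calc Real.cos φ ≤ Real.cos (Real.arccos (x 0)) :=
          Real.cos_le_cos_of_nonneg_of_le_pi (Real.arccos_nonneg _) (by linarith [Real.pi_pos]) h
      _ = x 0 := Real.cos_arccos (by linarith [abs_le.1 h1]) (by linarith [abs_le.1 h1])
  · intro h
    calc Real.arccos (x 0) ≤ Real.arccos (Real.cos φ) := by
          unfold Real.arccos
          exact sub_le_sub_left (Real.monotone_arcsin h) _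
      _ = φ := Real.arccos_cos hφ0.le (by linarith [Real.pi_pos])

lemma sector_eq (hφ0 : 0 < φ) (hφ1 : φ < π/2) :
    Ioo (0:ℝ) 1 • (Subtype.val '' {v : sphere (0 : Euc (n+1)) 1 |
        InnerProductGeometry.angle (v : Euc (n+1)) (EuclideanSpace.single 0 1) ≤ φ}) =
      {x : Euc (n+1) | 0 < ‖x‖ ∧ ‖x‖ < 1 ∧ Real.cos φ * ‖x‖ ≤ x 0} := by
  ext x
  constructor
  · rintro ⟨r, hr, y, ⟨v, hv, rfl⟩, rfl⟩
    have hv1 : ‖(v : Euc (n+1))‖ = 1 := by simpa using v.2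
    have hcos : Real.cos φ ≤ (v : Euc (n+1)) 0 :=
      (angle_le_iff hφ0 hφ1 _ hv1).1 hv
    have hnorm : ‖r • (v : Euc (n+1))‖ = r := by
      rw [norm_smul, hv1, mul_one, Real.norm_eq_abs, abs_of_pos hr.1]
    refine ⟨by rw [hnorm]; exact hr.1, by rw [hnorm]; exact hr.2, ?_⟩
    rw [hnorm]
    show Real.cos φ * r ≤ r * (v : Euc (n+1)) 0
    rw [mul_comm]
    exact mul_le_mul_of_nonneg_left hcos hr.1.le
  · rintro ⟨h0, h1, hc⟩
    have hx0 : x ≠ 0 := by intro h; rw [h] at h0; simp at h0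
    refine ⟨‖x‖, ⟨h0, h1⟩, ‖x‖⁻¹ • x, ⟨⟨‖x‖⁻¹ • x, ?_⟩, ?_, rfl⟩, ?_⟩
    · rw [mem_sphere_zero_iff_norm]; exact norm_smul_inv_norm hx0
    · rw [mem_setOf_eq]
      refine (angle_le_iff hφ0 hφ1 _ (norm_smul_inv_norm hx0)).2 ?_
      show Real.cos φ ≤ ‖x‖⁻¹ * x 0
      rw [← div_eq_inv_mul, le_div_iff₀ h0]
      linarith [hc]
    · exact smul_inv_smul₀ (by positivity) x


-- slice membership: T1 part
lemma mem_S_of_T1 (hφ0 : 0 < φ) (hφ1 : φ < π/2) {x : Euc (n+1)}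
    (ht : x 0 ∈ Ioc (0:ℝ) (Real.cos φ))
    (hq : ∑ j : Fin n, x j.succ ^ 2 < (x 0 * Real.tan φ) ^ 2) :
    0 < ‖x‖ ∧ ‖x‖ < 1 ∧ Real.cos φ * ‖x‖ ≤ x 0 := by
  have hc : 0 < Real.cos φ := Real.cos_pos_of_mem_Ioo ⟨by linarith [Real.pi_pos], hφ1⟩
  set t := x 0 with htdef
  set q := ∑ j : Fin n, x j.succ ^ 2 with hqdef
  have hq0 : 0 ≤ q := Finset.sum_nonneg fun _ _ => sq_nonneg _
  have hnorm : ‖x‖ = Real.sqrt (t ^ 2 + q) := by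
    rw [EuclideanSpace.norm_eq]
    congr 1
    rw [Fin.sum_univ_succ]
    simp [sq_abs, htdef, hqdef]
  have htan : (t * Real.tan φ) ^ 2 = t ^ 2 * (Real.sin φ / Real.cos φ) ^ 2 := by
    rw [Real.tan_eq_sin_div_cos]; ring
  have hsc : Real.sin φ ^ 2 + Real.cos φ ^ 2 = 1 := Real.sin_sq_add_cos_sq φ
  have hlt : t ^ 2 + q < t ^ 2 / Real.cos φ ^ 2 := by
    rw [htan] at hq
    rw [div_pow] at hq
    have : t ^ 2 + t ^ 2 * (Real.sin φ ^ 2 / Real.cos φ ^ 2) = t ^ 2 / Real.cos φ ^ 2 := by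
      field_simp
      nlinarith [hsc]
    linarith
  have hle1 : t ^ 2 / Real.cos φ ^ 2 ≤ 1 := by
    rw [div_le_one (by positivity)]
    nlinarith [ht.1, ht.2]
  refine ⟨?_, ?_, ?_⟩
  · rw [hnorm]
    exact Real.sqrt_pos.2 (by nlinarith [ht.1])
  · rw [hnorm]
    have : t ^ 2 + q < 1 := lt_of_lt_of_le hlt hle1
    calc Real.sqrt (t ^ 2 + q) < Real.sqrt 1 := by
          exact Real.sqrt_lt_sqrt (by positivity) this
      _ = 1 := Real.sqrt_one
  · rw [hnorm]
    have h1 : Real.sqrt (t ^ 2 + q) ≤ t / Real.cos φ := by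
      have : t ^ 2 + q ≤ (t / Real.cos φ) ^ 2 := by
        rw [div_pow]; linarith
      calc Real.sqrt (t ^ 2 + q) ≤ Real.sqrt ((t / Real.cos φ) ^ 2) :=
            Real.sqrt_le_sqrt this
        _ = t / Real.cos φ := Real.sqrt_sq (div_nonneg ht.1.le hc.le)
    calc Real.cos φ * Real.sqrt (t ^ 2 + q) ≤ Real.cos φ * (t / Real.cos φ) := by
          exact mul_le_mul_of_nonneg_left h1 hc.le
      _ = t := by field_simp

-- slice membership: T2 part
lemma mem_S_of_T2 (hφ0 : 0 < φ) (hφ1 : φ < π/2) {x : Euc (n+1)}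
    (ht : x 0 ∈ Ioc (Real.cos φ) 1)
    (hq : ∑ j : Fin n, x j.succ ^ 2
        < (Real.sin φ * (1 - x 0) / (1 - Real.cos φ)) ^ 2) :
    0 < ‖x‖ ∧ ‖x‖ < 1 ∧ Real.cos φ * ‖x‖ ≤ x 0 := by
  have hc : 0 < Real.cos φ := Real.cos_pos_of_mem_Ioo ⟨by linarith [Real.pi_pos], hφ1⟩
  have hc1 : Real.cos φ < 1 := by
    calc Real.cos φ < Real.cos 0 := by
          apply Real.cos_lt_cos_of_nonneg_of_le_pi le_rfl (by linarith [Real.pi_pos]) hφ0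
      _ = 1 := Real.cos_zero
  set t := x 0 with htdef
  set q := ∑ j : Fin n, x j.succ ^ 2 with hqdef
  have hq0 : 0 ≤ q := Finset.sum_nonneg fun _ _ => sq_nonneg _
  have hnorm : ‖x‖ = Real.sqrt (t ^ 2 + q) := by
    rw [EuclideanSpace.norm_eq]
    congr 1
    rw [Fin.sum_univ_succ]
    simp [sq_abs, htdef, hqdef]
  have hsc : Real.sin φ ^ 2 + Real.cos φ ^ 2 = 1 := Real.sin_sq_add_cos_sq φ
  have hell : (Real.sin φ * (1 - t) / (1 - Real.cos φ)) ^ 2 ≤ 1 - t ^ 2 := by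
    rw [div_pow, div_le_iff₀ (by nlinarith [hc1])]
    have key : 0 ≤ (1 - Real.cos φ) * (1 - t) * (t - Real.cos φ) :=
      mul_nonneg (mul_nonneg (by linarith [hc1]) (by linarith [ht.2])) (by linarith [ht.1])
    have hrw : (Real.sin φ * (1 - t)) ^ 2
        = (1 - Real.cos φ) * (1 + Real.cos φ) * (1 - t) ^ 2 := by
      have hs2 : Real.sin φ ^ 2 = (1 - Real.cos φ) * (1 + Real.cos φ) := by nlinarith [hsc]
      rw [mul_pow, hs2]
    rw [hrw]
    nlinarith [key]
  have hlt1 : t ^ 2 + q < 1 := by linarith [lt_of_lt_of_le hq hell]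
  refine ⟨?_, ?_, ?_⟩
  · rw [hnorm]
    have : 0 < t := lt_trans hc ht.1
    positivity
  · rw [hnorm]
    calc Real.sqrt (t ^ 2 + q) < Real.sqrt 1 := Real.sqrt_lt_sqrt (by positivity) hlt1
      _ = 1 := Real.sqrt_one
  · rw [hnorm]
    have h1 : Real.sqrt (t ^ 2 + q) ≤ 1 := by
      rw [show (1:ℝ) = Real.sqrt 1 by rw [Real.sqrt_one]]
      exact Real.sqrt_le_sqrt (by linarith)
    calc Real.cos φ * Real.sqrt (t ^ 2 + q) ≤ Real.cos φ * 1 :=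
          mul_le_mul_of_nonneg_left h1 hc.le
      _ = Real.cos φ := mul_one _
      _ ≤ t := ht.1.le

lemma sector_vol (n : ℕ) (hn : 1 ≤ n) (hφ0 : 0 < φ) (hφ1 : φ < π/2) :
    ENNReal.ofReal ((Real.sqrt π ^ n / Real.Gamma (n / 2 + 1)) * Real.sin φ ^ n / (n + 1)) ≤
      volume {x : Euc (n+1) | 0 < ‖x‖ ∧ ‖x‖ < 1 ∧ Real.cos φ * ‖x‖ ≤ x 0} := by
  have hc : 0 < Real.cos φ := Real.cos_pos_of_mem_Ioo ⟨by linarith [Real.pi_pos], hφ1⟩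
  have hc1 : Real.cos φ < 1 := by
    calc Real.cos φ < Real.cos 0 :=
          Real.cos_lt_cos_of_nonneg_of_le_pi le_rfl (by linarith [Real.pi_pos]) hφ0
      _ = 1 := Real.cos_zero
  have hs : 0 < Real.sin φ := Real.sin_pos_of_pos_of_lt_pi hφ0 (by linarith [Real.pi_pos])
  have htan : 0 < Real.tan φ := Real.tan_pos_of_pos_of_lt_pi_div_two hφ0 hφ1
  set c := Real.cos φ with hcdef
  set cn : ℝ := Real.sqrt π ^ n / Real.Gamma (n / 2 + 1) with hcndef
  have hcn : 0 < cn := by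
    apply div_pos (by positivity) (Real.Gamma_pos_of_pos (by positivity))
  set T1 : Set (ℝ × (Fin n → ℝ)) :=
    {p | p.1 ∈ Ioc (0:ℝ) c ∧ ∑ j, p.2 j ^ 2 < (p.1 * Real.tan φ) ^ 2} with hT1def
  set T2 : Set (ℝ × (Fin n → ℝ)) :=
    {p | p.1 ∈ Ioc c 1 ∧ ∑ j, p.2 j ^ 2 < (Real.sin φ * (1 - p.1) / (1 - c)) ^ 2} with hT2def
  have hmsum : Measurable fun p : ℝ × (Fin n → ℝ) => ∑ j, p.2 j ^ 2 := by
    apply Finset.measurable_sum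
    intro j _
    exact ((measurable_pi_apply j).comp measurable_snd).pow_const 2
  have hT1m : MeasurableSet T1 :=
    ((measurable_fst (measurableSet_Ioc : MeasurableSet (Ioc (0:ℝ) c)))).inter
      (measurableSet_lt hmsum (by measurability))
  have hT2m : MeasurableSet T2 :=
    ((measurable_fst (measurableSet_Ioc : MeasurableSet (Ioc c (1:ℝ))))).inter
      (measurableSet_lt hmsum (by measurability))
  have hdisj : Disjoint T1 T2 := by
    rw [Set.disjoint_left]
    rintro p ⟨h1, _⟩ ⟨h2, _⟩
    exact absurd h1.2 (not_le.2 h2.1)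
  -- the measure preserving chain
  have hMP : MeasurePreserving
      ((MeasurableEquiv.piFinSuccAbove (fun _ : Fin (n+1) => ℝ) 0) ∘
        (MeasurableEquiv.toLp 2 (Fin (n+1) → ℝ)).symm) volume volume :=
    (volume_preserving_piFinSuccAbove (fun _ : Fin (n+1) => ℝ) 0).comp
      (EuclideanSpace.volume_preserving_symm_measurableEquiv_toLp (Fin (n+1)))
  set F := (MeasurableEquiv.piFinSuccAbove (fun _ : Fin (n+1) => ℝ) 0) ∘
        (MeasurableEquiv.toLp 2 (Fin (n+1) → ℝ)).symm with hFdef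
  have hFx : ∀ x : Euc (n+1), F x = (x 0, fun j : Fin n => x j.succ) := by
    intro x
    ext1
    · rfl
    · funext j
      show x (Fin.succAbove 0 j) = x j.succ
      rw [Fin.zero_succAbove]
  have hsub : F ⁻¹' (T1 ∪ T2) ⊆
      {x : Euc (n+1) | 0 < ‖x‖ ∧ ‖x‖ < 1 ∧ Real.cos φ * ‖x‖ ≤ x 0} := by
    intro x hx
    rcases hx with hx | hx
    · rw [hFx x] at hx
      exact mem_S_of_T1 hφ0 hφ1 hx.1 hx.2
    · rw [hFx x] at hx
      exact mem_S_of_T2 hφ0 hφ1 hx.1 hx.2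
  have hvol : volume (T1 ∪ T2) ≤
      volume {x : Euc (n+1) | 0 < ‖x‖ ∧ ‖x‖ < 1 ∧ Real.cos φ * ‖x‖ ≤ x 0} := by
    rw [← hMP.measure_preimage (hT1m.union hT2m).nullMeasurableSet]
    exact measure_mono hsub
  refine le_trans ?_ hvol
  rw [measure_union hdisj hT2m]
  -- compute volume of T1
  have hT1vol : (volume : Measure (ℝ × (Fin n → ℝ))) T1
      = ENNReal.ofReal (cn * Real.sin φ ^ n * c / (n + 1)) := by
    rw [Measure.volume_eq_prod, Measure.prod_apply hT1m]
    have hslice : (fun t : ℝ => volume (Prod.mk t ⁻¹' T1))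
        = (Ioc (0:ℝ) c).indicator (fun t => ENNReal.ofReal ((t * Real.tan φ) ^ n * cn)) := by
      funext t
      by_cases ht : t ∈ Ioc (0:ℝ) c
      · have hpre : Prod.mk t ⁻¹' T1 = {y : Fin n → ℝ | ∑ j, y j ^ 2 < (t * Real.tan φ) ^ 2} := by
          ext y; exact ⟨fun h => h.2, fun h => ⟨ht, h⟩⟩
        have hr0 : (0:ℝ) ≤ t * Real.tan φ := by
          have := ht.1; positivity
        rw [hpre, pi_sumsq_vol n hn hr0, Set.indicator_of_mem ht]
      · have hpre : Prod.mk t ⁻¹' T1 = ∅ := by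
          ext y
          simp only [Set.mem_empty_iff_false, iff_false]
          exact fun h => ht h.1
        rw [hpre, Set.indicator_of_notMem ht, measure_empty]
    rw [hslice, lintegral_indicator measurableSet_Ioc]
    have hint : IntegrableOn (fun t : ℝ => (t * Real.tan φ) ^ n * cn) (Ioc 0 c) volume := by
      apply Continuous.integrableOn_Ioc
      exact ((continuous_id.mul continuous_const).pow n).mul continuous_const
    rw [← ofReal_integral_eq_lintegral_ofReal hint ?_]
    · congr 1
      rw [← intervalIntegral.integral_of_le hc.le]
      have : (fun t : ℝ => (t * Real.tan φ) ^ n * cn)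
          = fun t : ℝ => t ^ n * (Real.tan φ ^ n * cn) := by
        funext t; rw [mul_pow]; ring
      rw [this, intervalIntegral.integral_mul_const, integral_pow]
      have hcne : Real.cos φ ≠ 0 := ne_of_gt hc
      rw [Real.tan_eq_sin_div_cos, div_pow]
      field_simp
      ring
    · filter_upwards [ae_restrict_mem measurableSet_Ioc] with t ht
      have := ht.1; positivity
  -- compute volume of T2
  have hT2vol : (volume : Measure (ℝ × (Fin n → ℝ))) T2
      = ENNReal.ofReal (cn * Real.sin φ ^ n * (1 - c) / (n + 1)) := by
    rw [Measure.volume_eq_prod, Measure.prod_apply hT2m]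
    have hslice : (fun t : ℝ => volume (Prod.mk t ⁻¹' T2))
        = (Ioc c (1:ℝ)).indicator
            (fun t => ENNReal.ofReal ((Real.sin φ * (1 - t) / (1 - c)) ^ n * cn)) := by
      funext t
      by_cases ht : t ∈ Ioc c (1:ℝ)
      · have hpre : Prod.mk t ⁻¹' T2
            = {y : Fin n → ℝ | ∑ j, y j ^ 2 < (Real.sin φ * (1 - t) / (1 - c)) ^ 2} := by
          ext y; exact ⟨fun h => h.2, fun h => ⟨ht, h⟩⟩
        have hr0 : (0:ℝ) ≤ Real.sin φ * (1 - t) / (1 - c) := by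
          apply div_nonneg (mul_nonneg hs.le (by linarith [ht.2])) (by linarith)
        rw [hpre, pi_sumsq_vol n hn hr0, Set.indicator_of_mem ht]
      · have hpre : Prod.mk t ⁻¹' T2 = ∅ := by
          ext y
          simp only [Set.mem_empty_iff_false, iff_false]
          exact fun h => ht h.1
        rw [hpre, Set.indicator_of_notMem ht, measure_empty]
    rw [hslice, lintegral_indicator measurableSet_Ioc]
    have hint : IntegrableOn (fun t : ℝ => (Real.sin φ * (1 - t) / (1 - c)) ^ n * cn)
        (Ioc c 1) volume := by
      apply Continuous.integrableOn_Ioc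
      exact (((continuous_const.mul (continuous_const.sub continuous_id)).div_const
        (1 - c)).pow n).mul continuous_const
    rw [← ofReal_integral_eq_lintegral_ofReal hint ?_]
    · congr 1
      rw [← intervalIntegral.integral_of_le hc1.le]
      have : (fun t : ℝ => (Real.sin φ * (1 - t) / (1 - c)) ^ n * cn)
          = fun t : ℝ => (1 - t) ^ n * ((Real.sin φ / (1 - c)) ^ n * cn) := by
        funext t
        rw [div_pow, mul_pow]
        ring
      rw [this, intervalIntegral.integral_mul_const]
      have hone : ∫ t in c..(1:ℝ), (1 - t) ^ n = (1 - c) ^ (n+1) / (n+1) := by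
        have := intervalIntegral.integral_comp_sub_left (a := c) (b := (1:ℝ))
          (fun u : ℝ => u ^ n) 1
        rw [this, integral_pow]
        norm_num
      rw [hone]
      have h1c : (1:ℝ) - c ≠ 0 := by linarith
      field_simp
      have hk : (1 - c)⁻¹ ^ n * (1 - c) ^ n = 1 := by rw [← mul_pow, inv_mul_cancel₀ h1c, one_pow]
      linear_combination (Real.sin φ ^ n - c * Real.sin φ ^ n) * hk
    · filter_upwards [ae_restrict_mem measurableSet_Ioc] with t ht
      have h1 : 0 ≤ Real.sin φ * (1 - t) / (1 - c) :=
        div_nonneg (mul_nonneg hs.le (by linarith [ht.2])) (by linarith)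
      positivity
  rw [hT1vol, hT2vol, ← ENNReal.ofReal_add (by positivity) ?_]
  · apply le_of_eq
    congr 1
    field_simp
    ring
  · apply div_nonneg (mul_nonneg (mul_nonneg hcn.le (by positivity)) (by linarith)) (by positivity)

lemma gamma_ratio' {y : ℝ} (hy : 1 ≤ y) :
    Real.sqrt (y - 1/2) < Real.Gamma (y + 1/2) / Real.Gamma y := by
  have hy0 : (0:ℝ) < y := by linarith
  have hG : 0 < Real.Gamma y := Real.Gamma_pos_of_pos hy0
  have hGh : 0 < Real.Gamma (y + 1/2) := Real.Gamma_pos_of_pos (by linarith)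
  have key : Real.Gamma (y + 1) ≤ Real.Gamma (y + 1/2) * Real.sqrt (y + 1/2) := by
    have h := Real.Gamma_mul_add_mul_le_rpow_Gamma_mul_rpow_Gamma
      (s := y + 1/2) (t := y + 3/2) (a := 1/2) (b := 1/2)
      (by linarith) (by linarith) (by norm_num) (by norm_num) (by norm_num)
    have hmid : (1/2 : ℝ) * (y + 1/2) + (1/2) * (y + 3/2) = y + 1 := by ring
    rw [hmid] at h
    have h32 : Real.Gamma (y + 3/2) = (y + 1/2) * Real.Gamma (y + 1/2) := by
      have := Real.Gamma_add_one (s := y + 1/2) (by positivity)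
      rw [show y + 3/2 = y + 1/2 + 1 by ring, this]
    rw [h32] at h
    calc Real.Gamma (y+1) ≤ Real.Gamma (y+1/2) ^ (1/2:ℝ) *
          ((y + 1/2) * Real.Gamma (y + 1/2)) ^ (1/2:ℝ) := h
      _ = Real.Gamma (y + 1/2) * Real.sqrt (y + 1/2) := by
          rw [Real.mul_rpow (by positivity) hGh.le, Real.sqrt_eq_rpow]
          rw [show Real.Gamma (y+1/2) ^ (1/2:ℝ) * ((y + 1/2) ^ (1/2:ℝ) * Real.Gamma (y+1/2) ^ (1/2:ℝ))
              = (Real.Gamma (y+1/2) ^ (1/2:ℝ) * Real.Gamma (y+1/2) ^ (1/2:ℝ)) * (y + 1/2) ^ (1/2:ℝ) by ring,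
            ← Real.rpow_add hGh]
          norm_num
  have hy1 : Real.Gamma (y + 1) = y * Real.Gamma y := Real.Gamma_add_one hy0.ne'
  have hsq : 0 < Real.sqrt (y + 1/2) := Real.sqrt_pos.2 (by linarith)
  have hlow : y / Real.sqrt (y + 1/2) ≤ Real.Gamma (y + 1/2) / Real.Gamma y := by
    rw [div_le_div_iff₀ hsq hG]
    calc y * Real.Gamma y = Real.Gamma (y+1) := hy1.symm
      _ ≤ Real.Gamma (y + 1/2) * Real.sqrt (y + 1/2) := key
  refine lt_of_lt_of_le ?_ hlow
  rw [Real.sqrt_lt' (by positivity)]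
  rw [div_pow, Real.sq_sqrt (by linarith)]
  rw [lt_div_iff₀ (by linarith)]
  nlinarith


theorem omega_gt' (n : ℕ) (hn : 1 ≤ n) {φ : ℝ} (hφ0 : 0 < φ) (hφ1 : φ < π / 2) :
    Real.sin φ ^ n / Real.sqrt (2 * π * (n + 1)) <
      ((((volume : Measure (Euc (n+1))).toSphere Set.univ)⁻¹ •
        (volume : Measure (Euc (n+1))).toSphere) {v : sphere (0 : Euc (n+1)) 1 |
          InnerProductGeometry.angle (v : Euc (n+1)) (EuclideanSpace.single 0 1) ≤ φ}).toReal := by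
  have hc : 0 < Real.cos φ := Real.cos_pos_of_mem_Ioo ⟨by linarith [Real.pi_pos], hφ1⟩
  have hs : 0 < Real.sin φ := Real.sin_pos_of_pos_of_lt_pi hφ0 (by linarith [Real.pi_pos])
  set cap : Set (sphere (0 : Euc (n+1)) 1) := {v : sphere (0 : Euc (n+1)) 1 |
      InnerProductGeometry.angle (v : Euc (n+1)) (EuclideanSpace.single 0 1) ≤ φ} with hcapdef
  set S : Set (Euc (n+1)) :=
    {x : Euc (n+1) | 0 < ‖x‖ ∧ ‖x‖ < 1 ∧ Real.cos φ * ‖x‖ ≤ x 0} with hSdef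
  have me : Measurable fun x : Euc (n+1) => x 0 :=
    (measurable_pi_apply 0).comp (MeasurableEquiv.toLp 2 (Fin (n+1) → ℝ)).symm.measurable
  have hcapm : MeasurableSet cap := by
    have hcapeq : cap = Subtype.val ⁻¹' {x : Euc (n+1) | Real.cos φ ≤ x 0} := by
      ext v
      have hv1 : ‖(v : Euc (n+1))‖ = 1 := by simp [mem_sphere_zero_iff_norm.1 v.2]
      simp only [hcapdef, Set.mem_setOf_eq, Set.mem_preimage]
      exact angle_le_iff hφ0 hφ1 _ hv1
    rw [hcapeq]
    exact measurable_subtype_coe (measurableSet_le measurable_const me)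
  set A := volume S with hAdef
  set B := volume (Metric.ball (0 : Euc (n+1)) 1) with hBdef
  have hSball : S ⊆ Metric.ball (0 : Euc (n+1)) 1 := by
    intro x hx; exact mem_ball_zero_iff.2 hx.2.1
  have hAB : A ≤ B := measure_mono hSball
  have hAtop : A ≠ ⊤ := (lt_of_le_of_lt hAB measure_ball_lt_top).ne
  have hdim : Module.finrank ℝ (Euc (n+1)) = n + 1 := finrank_euclideanSpace_fin
  have htS : (volume : Measure (Euc (n+1))).toSphere cap = (n+1 : ℕ) * A := by
    rw [Measure.toSphere_apply' _ hcapm, hdim, hAdef, hSdef, ← sector_eq hφ0 hφ1]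
  have htSU : (volume : Measure (Euc (n+1))).toSphere Set.univ = (n+1 : ℕ) * B := by
    rw [Measure.toSphere_apply_univ, hdim]
  rw [Measure.smul_apply, smul_eq_mul, htS, htSU,
    ENNReal.toReal_mul, ENNReal.toReal_inv, ENNReal.toReal_mul, ENNReal.toReal_mul,
    ENNReal.toReal_natCast]
  set cn : ℝ := Real.sqrt π ^ n / Real.Gamma (n / 2 + 1) with hcndef
  have hcn : 0 < cn := div_pos (by positivity) (Real.Gamma_pos_of_pos (by positivity))
  set bv : ℝ := Real.sqrt π ^ (n+1) / Real.Gamma ((n+1 : ℕ) / 2 + 1) with hbvdef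
  have hbv : 0 < bv := div_pos (by positivity) (Real.Gamma_pos_of_pos (by positivity))
  have hBval : B.toReal = bv := by
    rw [hBdef, EuclideanSpace.volume_ball, Fintype.card_fin, ENNReal.ofReal_one, one_pow, one_mul,
      ENNReal.toReal_ofReal (by positivity)]
  have hAval : cn * Real.sin φ ^ n / (n + 1) ≤ A.toReal := by
    have h1 := sector_vol n hn hφ0 hφ1
    have h2 := ENNReal.toReal_mono hAtop h1
    rwa [ENNReal.toReal_ofReal (by positivity)] at h2
  rw [hBval]
  have hnp : (0:ℝ) < ((n+1 : ℕ) : ℝ) := by positivity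
  have hconst : 1 / Real.sqrt (2 * π * (n + 1)) < cn / (((n+1:ℕ):ℝ) * bv) := by
    have hy : (1:ℝ) ≤ (n:ℝ)/2 + 1 := by linarith [Nat.cast_nonneg (α := ℝ) n]
    have hg := gamma_ratio' hy
    have harg : ((n:ℝ)/2 + 1) + 1/2 = ((n+1 : ℕ) : ℝ)/2 + 1 := by push_cast; ring
    have harg2 : ((n:ℝ)/2 + 1) - 1/2 = ((n:ℝ)+1)/2 := by ring
    rw [harg, harg2] at hg
    have hGn : 0 < Real.Gamma ((n:ℝ)/2 + 1) := Real.Gamma_pos_of_pos (by positivity)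
    have hGn1 : 0 < Real.Gamma (((n+1:ℕ):ℝ)/2 + 1) := Real.Gamma_pos_of_pos (by positivity)
    have heq : cn / (((n+1:ℕ):ℝ) * bv)
        = (Real.Gamma (((n+1:ℕ):ℝ)/2 + 1) / Real.Gamma ((n:ℝ)/2 + 1))
            * (1 / (((n+1:ℕ):ℝ) * Real.sqrt π)) := by
      rw [hcndef, hbvdef]
      have hsp : (0:ℝ) < Real.sqrt π := Real.sqrt_pos.2 Real.pi_pos
      rw [pow_succ]
      field_simp
    have hsq : Real.sqrt (((n:ℝ)+1)/2) * (1 / (((n+1:ℕ):ℝ) * Real.sqrt π))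
        = 1 / Real.sqrt (2 * π * (n + 1)) := by
      have hsp : (0:ℝ) < Real.sqrt π := Real.sqrt_pos.2 Real.pi_pos
      have hs2 : (0:ℝ) < Real.sqrt (2 * π * (n + 1)) := Real.sqrt_pos.2 (by positivity)
      have hss : (0:ℝ) < Real.sqrt (((n:ℝ)+1)/2) := Real.sqrt_pos.2 (by positivity)
      rw [mul_one_div, div_eq_div_iff (by positivity) hs2.ne']
      rw [← Real.sqrt_mul (by positivity)]
      have : ((n:ℝ)+1)/2 * (2 * π * (n + 1)) = π * ((n:ℝ)+1)^2 := by push_cast; ring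
      rw [this, Real.sqrt_mul Real.pi_pos.le, Real.sqrt_sq (by positivity)]
      push_cast
      ring
    rw [heq, ← hsq]
    apply mul_lt_mul_of_pos_right hg
    positivity
  calc Real.sin φ ^ n / Real.sqrt (2 * π * (n + 1))
      = (1 / Real.sqrt (2 * π * (n + 1))) * Real.sin φ ^ n := by ring
    _ < (cn / (((n+1:ℕ):ℝ) * bv)) * Real.sin φ ^ n := by
        exact mul_lt_mul_of_pos_right hconst (by positivity)
    _ = (cn * Real.sin φ ^ n / (n+1)) / bv * (((n+1:ℕ):ℝ) / ((n+1:ℕ):ℝ)) := by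
        push_cast
        field_simp
    _ = (cn * Real.sin φ ^ n / (n+1)) / bv := by
        rw [div_self (ne_of_gt hnp), mul_one]
    _ ≤ A.toReal / bv := by
        gcongr
    _ = (((n+1:ℕ):ℝ) * bv)⁻¹ * (((n+1:ℕ):ℝ) * A.toReal) := by
        rw [mul_inv]
        field_simp

end Aux

set_option maxHeartbeats 1000000 in
/-- **Böröczky–Wintsche, lower cap bound.** `Ω_n(φ) > sinⁿ φ / √(2π(n+1))`. -/
theorem omega_gt (n : ℕ) (hn : 1 ≤ n) (φ : ℝ) (hφ0 : 0 < φ) (hφ1 : φ < π / 2) :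
    Real.sin φ ^ n / Real.sqrt (2 * π * (n + 1)) < Omega n φ := by
  rw [Omega, sphereHaar]
  exact omega_gt' n hn hφ0 hφ1
end
end

section
/- For every integer n ≥ 1 and every 0 < φ < π/2 with φ ≤ arccos(1/√(n+1)), the normalized measure of a spherical cap of angular radius φ on the sphere S^n satisfies Ω_n(φ) < sin^n(φ) / (√(2πn)·cos φ). -/
open Set Metric MeasureTheory ProbabilityTheory InnerProductGeometry Real


noncomputable section

open Pointwise ENNReal RealInnerProductSpace in
private lemma BW_sum_sq_eq_normsq {n : ℕ} (x : Euc n) : ∑ i, x i ^ 2 = ‖x‖ ^ 2 := by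
  rw [EuclideanSpace.norm_eq, Real.sq_sqrt (by positivity)]
  simp [sq_abs]

private lemma BW_coord_le_norm {n : ℕ} (x : Euc n) (i : Fin n) : |x i| ≤ ‖x‖ := by
  have h1 : x i ^ 2 ≤ ∑ j, x j ^ 2 :=
    Finset.single_le_sum (fun j _ => sq_nonneg (x j)) (Finset.mem_univ i)
  rw [BW_sum_sq_eq_normsq] at h1
  calc |x i| = Real.sqrt (x i ^ 2) := (Real.sqrt_sq_eq_abs _).symm
  _ ≤ Real.sqrt (‖x‖ ^ 2) := Real.sqrt_le_sqrt h1
  _ = ‖x‖ := Real.sqrt_sq (norm_nonneg x)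

open RealInnerProductSpace in
private lemma BW_angle_iff {n : ℕ} (φ : ℝ) (hφ0 : 0 < φ) (hφ1 : φ < π/2) (v : Euc (n+1))
    (hv : ‖v‖ = 1) :
    angle v (EuclideanSpace.single 0 (1:ℝ)) ≤ φ ↔ Real.cos φ ≤ v 0 := by
  have h1 : ⟪v, (EuclideanSpace.single 0 (1:ℝ) : Euc (n+1))⟫ = v 0 := by
    rw [EuclideanSpace.inner_single_right]; simp
  have hb : |v 0| ≤ 1 := hv ▸ BW_coord_le_norm v 0
  have hb1 : -1 ≤ v 0 := neg_le_of_abs_le hb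
  have hb2 : v 0 ≤ 1 := le_of_abs_le hb
  have h2 : angle v (EuclideanSpace.single 0 (1:ℝ)) = Real.arccos (v 0) := by
    unfold InnerProductGeometry.angle
    rw [h1, hv]
    norm_num
  rw [h2]
  constructor
  · intro h
    calc Real.cos φ ≤ Real.cos (Real.arccos (v 0)) :=
        Real.cos_le_cos_of_nonneg_of_le_pi (Real.arccos_nonneg _) (by linarith [Real.pi_pos]) h
    _ = v 0 := Real.cos_arccos hb1 hb2
  · intro h
    have hm : Real.arccos (v 0) ≤ Real.arccos (Real.cos φ) := by
      rw [Real.arccos_eq_pi_div_two_sub_arcsin, Real.arccos_eq_pi_div_two_sub_arcsin]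
      have := Real.monotone_arcsin h
      linarith
    calc Real.arccos (v 0) ≤ Real.arccos (Real.cos φ) := hm
    _ = φ := Real.arccos_cos hφ0.le (by linarith [Real.pi_pos])

open Pointwise in
private lemma BW_cone_eq {n : ℕ} (c : ℝ) (hc : 0 < c) :
    Ioo (0:ℝ) 1 • (Metric.sphere (0 : Euc (n+1)) 1 ∩ {x | c ≤ x 0}) =
      {x : Euc (n+1) | 0 < ‖x‖ ∧ ‖x‖ < 1 ∧ c * ‖x‖ ≤ x 0} := by
  ext x
  constructor
  · rintro ⟨a, ha, v, ⟨hv, hv0⟩, rfl⟩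
    rw [mem_Ioo] at ha
    rw [mem_sphere_zero_iff_norm] at hv
    have hnorm : ‖a • v‖ = a := by rw [norm_smul, hv, Real.norm_eq_abs, abs_of_pos ha.1, mul_one]
    refine ⟨by rw [hnorm]; exact ha.1, by rw [hnorm]; exact ha.2, ?_⟩
    rw [hnorm]
    show c * a ≤ a * v 0
    calc c * a = a * c := mul_comm _ _
    _ ≤ a * v 0 := by exact mul_le_mul_of_nonneg_left hv0 ha.1.le
  · rintro ⟨h1, h2, h3⟩
    refine ⟨‖x‖, mem_Ioo.2 ⟨h1, h2⟩, ‖x‖⁻¹ • x, ⟨?_, ?_⟩, ?_⟩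
    · rw [mem_sphere_zero_iff_norm, norm_smul, Real.norm_eq_abs, abs_of_pos (inv_pos.2 h1),
        inv_mul_cancel₀ h1.ne']
    · show c ≤ (‖x‖⁻¹ • x) 0
      show c ≤ ‖x‖⁻¹ * x 0
      rw [inv_mul_eq_div, le_div_iff₀ h1]
      linarith
    · show ‖x‖ • ‖x‖⁻¹ • x = x
      rw [smul_smul, mul_inv_cancel₀ h1.ne', one_smul]

set_option maxHeartbeats 1000000 in
private lemma BW_ftc (n : ℕ) (c s : ℝ) (hc : 0 < c) (hc1 : c < 1) (hs : 0 < s)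
    (hcs : c^2 + s^2 = 1) :
    ∫ t in c..1, t * Real.sqrt (1 - t^2) ^ n = s^(n+2) / (n+2) := by
  set F : ℝ → ℝ := fun t => -(Real.sqrt (1 - t^2) ^ (n+2)) / (n+2) with hF
  have key : ∫ t in c..1, t * Real.sqrt (1 - t^2) ^ n = F 1 - F c := by
    apply intervalIntegral.integral_eq_sub_of_hasDerivAt_of_le (f := F)
      (f' := fun t => t * Real.sqrt (1-t^2)^n) hc1.le
    · apply Continuous.continuousOn
      continuity
    · intro t ht
      rw [mem_Ioo] at ht
      have hu : 0 < 1 - t^2 := by nlinarith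
      have h1 : HasDerivAt (fun t : ℝ => 1 - t^2) (-(2*t)) t := by
        simpa using ((hasDerivAt_pow 2 t).const_sub 1)
      have h2 : HasDerivAt (fun t : ℝ => Real.sqrt (1 - t^2))
          (1 / (2 * Real.sqrt (1 - t^2)) * (-(2*t))) t :=
        (Real.hasDerivAt_sqrt hu.ne').comp t h1
      have h3 : HasDerivAt (fun t : ℝ => Real.sqrt (1 - t^2) ^ (n+2))
          ((n+2 : ℕ) * Real.sqrt (1 - t^2) ^ (n+1) *
            (1 / (2 * Real.sqrt (1 - t^2)) * (-(2*t)))) t := h2.pow (n+2)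
      have h4 := (h3.neg).div_const ((n:ℝ)+2)
      rw [hF]
      convert h4 using 1
      have hsq : Real.sqrt (1 - t^2) > 0 := Real.sqrt_pos.2 hu
      · rfl
      · rfl
      field_simp
      rw [pow_succ]
      push_cast
      ring
    · apply Continuous.intervalIntegrable
      continuity
  rw [key, hF]
  have h1 : Real.sqrt (1 - 1^2) = 0 := by norm_num
  have h2 : Real.sqrt (1 - c^2) = s := by
    rw [show 1 - c^2 = s^2 by linarith, Real.sqrt_sq hs.le]
  simp only [h1, h2]
  rw [zero_pow (by omega)]
  ring

set_option maxHeartbeats 1600000 in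
open ENNReal in
private lemma BW_volS_le {n : ℕ} (c s : ℝ) (hc : 0 < c) (hc1 : c < 1) (hs : 0 < s)
    (hcs : c^2 + s^2 = 1) :
    volume {x : Euc (n+1) | 0 < ‖x‖ ∧ ‖x‖ < 1 ∧ c * ‖x‖ ≤ x 0}
      ≤ ENNReal.ofReal (s^n * c/((n:ℝ)+1) + s^(n+2)/(((n:ℝ)+2)*c)) *
        volume (Metric.ball (0 : Euc n) 1) := by
  have hftc := BW_ftc n c s hc hc1 hs hcs
  set g : ℝ → ℝ := fun t => min (t * (s/c)) (Real.sqrt (1 - t^2)) with hgdef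
  have hgcont : Continuous g := by
    apply Continuous.min
    · exact continuous_id.mul continuous_const
    · exact Real.continuous_sqrt.comp (continuous_const.sub (continuous_pow 2))
  set T : Set (ℝ × (Fin n → ℝ)) := {p | p.1 ∈ Icc (0:ℝ) 1 ∧ ∑ j, p.2 j ^ 2 ≤ g p.1 ^ 2} with hT
  have hTmeas : MeasurableSet T := by
    apply MeasurableSet.inter
    · exact measurable_fst measurableSet_Icc
    · show MeasurableSet {p : ℝ × (Fin n → ℝ) | ∑ j, p.2 j ^ 2 ≤ g p.1 ^ 2}
      exact measurableSet_le
        (Finset.measurable_sum _ fun j _ => (((measurable_snd.eval (a := j))).pow_const 2))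
        ((hgcont.comp continuous_fst).pow 2).measurable
  have hF : MeasurePreserving
      (fun x : Euc (n+1) => ((MeasurableEquiv.piFinSuccAbove (fun _ : Fin (n+1) => ℝ) 0)
        ((MeasurableEquiv.toLp 2 (Fin (n+1) → ℝ)).symm x))) volume volume :=
    (volume_preserving_piFinSuccAbove (fun _ : Fin (n+1) => ℝ) 0).comp
      (EuclideanSpace.volume_preserving_symm_measurableEquiv_toLp (Fin (n+1)))
  set F := fun x : Euc (n+1) => ((MeasurableEquiv.piFinSuccAbove (fun _ : Fin (n+1) => ℝ) 0)
        ((MeasurableEquiv.toLp 2 (Fin (n+1) → ℝ)).symm x))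
  have hsub : {x : Euc (n+1) | 0 < ‖x‖ ∧ ‖x‖ < 1 ∧ c * ‖x‖ ≤ x 0} ⊆ F ⁻¹' T := by
    rintro x ⟨h1, h2, h3⟩
    have hFx : F x = (x 0, fun j => x (Fin.succAbove 0 j)) := rfl
    have hsplit : x 0 ^ 2 + ∑ j : Fin n, x (Fin.succAbove 0 j) ^ 2 = ‖x‖ ^ 2 := by
      rw [← BW_sum_sq_eq_normsq x, Fin.sum_univ_succ]; rfl
    have ht0 : 0 < x 0 := lt_of_lt_of_le (by positivity) h3
    have htr : x 0 ≤ ‖x‖ := by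
      nlinarith [Finset.sum_nonneg (fun j (_ : j ∈ Finset.univ) =>
        sq_nonneg (x (Fin.succAbove 0 j))), norm_nonneg x]
    simp only [mem_preimage, hFx, hT, mem_setOf_eq, mem_Icc]
    refine ⟨⟨ht0.le, htr.trans h2.le⟩, ?_⟩
    have key1 : ∑ j : Fin n, x (Fin.succAbove 0 j) ^ 2 ≤ 1 - x 0 ^ 2 := by nlinarith
    have key2 : ∑ j : Fin n, x (Fin.succAbove 0 j) ^ 2 ≤ (x 0 * (s/c)) ^ 2 := by
      have h4 : (c * ‖x‖)^2 ≤ x 0 ^2 := pow_le_pow_left₀ (by positivity) h3 2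
      have heq : (x 0 * (s/c))^2 = x 0^2 * s^2/c^2 := by ring
      rw [heq, le_div_iff₀ (by positivity)]
      nlinarith [hsplit, h4, hcs]
    rcases min_cases (x 0 * (s/c)) (Real.sqrt (1 - x 0 ^2)) with ⟨hmin, _⟩ | ⟨hmin, _⟩
    · show ∑ j : Fin n, x (Fin.succAbove 0 j) ^ 2 ≤ (g (x 0))^2
      rw [hgdef]; simp only []; rw [hmin]; exact key2
    · show ∑ j : Fin n, x (Fin.succAbove 0 j) ^ 2 ≤ (g (x 0))^2
      rw [hgdef]; simp only []; rw [hmin, Real.sq_sqrt (by nlinarith)]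
      exact key1
  have hgnonneg : ∀ t ∈ Icc (0:ℝ) 1, 0 ≤ g t := by
    intro t ht
    rw [hgdef]
    exact le_min (by have := ht.1; positivity) (Real.sqrt_nonneg _)
  set Bn := volume (Metric.ball (0 : Euc n) 1) with hBn
  have hsec : ∀ t : ℝ, volume {y : Fin n → ℝ | (t, y) ∈ T} =
      (Icc (0:ℝ) 1).indicator (fun t => ENNReal.ofReal (g t ^ n) * Bn) t := by
    intro t
    by_cases ht : t ∈ Icc (0:ℝ) 1
    · rw [indicator_of_mem ht]
      have hgt : 0 ≤ g t := hgnonneg t ht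
      have hset : {y : Fin n → ℝ | (t, y) ∈ T} =
          (MeasurableEquiv.toLp 2 (Fin n → ℝ)).symm.symm ⁻¹' (Metric.closedBall (0 : Euc n) (g t)) := by
        ext y
        simp only [hT, mem_setOf_eq, mem_preimage, Metric.mem_closedBall, dist_zero_right, ht,
          true_and]
        have hnorm : ‖(MeasurableEquiv.toLp 2 (Fin n → ℝ)).symm.symm y‖ =
            Real.sqrt (∑ j, y j ^ 2) := by
          rw [EuclideanSpace.norm_eq]
          simp only [Real.norm_eq_abs, sq_abs]
          rfl
        rw [hnorm]
        constructor
        · intro h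
          calc Real.sqrt (∑ j, y j ^2) ≤ Real.sqrt (g t ^2) := Real.sqrt_le_sqrt h
          _ = g t := Real.sqrt_sq hgt
        · intro h
          calc ∑ j, y j ^2 = Real.sqrt (∑ j, y j ^2) ^ 2 := (Real.sq_sqrt (by positivity)).symm
          _ ≤ g t ^ 2 := by
              apply pow_le_pow_left₀ (Real.sqrt_nonneg _) h
      rw [hset, ((EuclideanSpace.volume_preserving_symm_measurableEquiv_toLp (Fin n)).symm).measure_preimage
        measurableSet_closedBall.nullMeasurableSet,
        Measure.addHaar_closedBall _ _ hgt, finrank_euclideanSpace_fin]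
    · rw [indicator_of_notMem ht]
      have : {y : Fin n → ℝ | (t, y) ∈ T} = ∅ := by
        ext y
        simp only [hT, mem_setOf_eq, mem_empty_iff_false, iff_false, not_and]
        intro h1
        exact absurd h1 ht
      rw [this, measure_empty]
  have hvolT : volume T = (∫⁻ t in Icc (0:ℝ) 1, ENNReal.ofReal (g t ^ n)) * Bn := by
    rw [MeasureTheory.Measure.volume_eq_prod, Measure.prod_apply hTmeas]
    calc (∫⁻ t, volume (Prod.mk t ⁻¹' T)) = ∫⁻ t, (Icc (0:ℝ) 1).indicator
          (fun t => ENNReal.ofReal (g t ^ n) * Bn) t := by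
          congr 1; ext t; exact hsec t
    _ = ∫⁻ t in Icc (0:ℝ) 1, ENNReal.ofReal (g t ^ n) * Bn := by
          rw [lintegral_indicator measurableSet_Icc]
    _ = (∫⁻ t in Icc (0:ℝ) 1, ENNReal.ofReal (g t ^ n)) * Bn :=
          lintegral_mul_const'' Bn (((hgcont.pow n).measurable.ennreal_ofReal).aemeasurable)
  have hsplitIcc : Icc (0:ℝ) 1 = Icc 0 c ∪ Ioc c 1 := (Icc_union_Ioc_eq_Icc hc.le hc1.le).symm
  have hdisj : Disjoint (Icc (0:ℝ) c) (Ioc c 1) := by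
    rw [Set.disjoint_left]
    rintro t ⟨_, h1⟩ ⟨h2, _⟩
    exact absurd h1 (not_le.2 h2)
  have hbound : (∫⁻ t in Icc (0:ℝ) 1, ENNReal.ofReal (g t ^ n)) ≤
      ENNReal.ofReal (s^n * c/((n:ℝ)+1) + s^(n+2)/(((n:ℝ)+2)*c)) := by
    rw [hsplitIcc, lintegral_union measurableSet_Ioc hdisj]
    have hp1 : (∫⁻ t in Icc (0:ℝ) c, ENNReal.ofReal (g t ^ n)) ≤
        ENNReal.ofReal (s^n * c/((n:ℝ)+1)) := by
      calc (∫⁻ t in Icc (0:ℝ) c, ENNReal.ofReal (g t ^ n))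
          ≤ ∫⁻ t in Icc (0:ℝ) c, ENNReal.ofReal ((s/c * t) ^ n) := by
            apply setLIntegral_mono
              ((((continuous_const.mul continuous_id).pow n).measurable).ennreal_ofReal)
            intro t ⟨ht0, htc⟩
            apply ENNReal.ofReal_le_ofReal
            apply pow_le_pow_left₀ (hgnonneg t ⟨ht0, htc.trans hc1.le⟩)
            rw [hgdef]
            calc min (t * (s/c)) (Real.sqrt (1 - t^2)) ≤ t * (s/c) := min_le_left _ _
            _ = s/c * t := mul_comm _ _
        _ = ENNReal.ofReal (∫ t in Icc (0:ℝ) c, (s/c * t) ^ n) := by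
            rw [← MeasureTheory.ofReal_integral_eq_lintegral_ofReal]
            · exact (Continuous.integrableOn_Icc (by continuity))
            · exact (ae_restrict_mem measurableSet_Icc).mono fun t ⟨ht0, _⟩ => by positivity
        _ = ENNReal.ofReal (s^n * c/((n:ℝ)+1)) := by
            congr 1
            rw [MeasureTheory.integral_Icc_eq_integral_Ioc, ← intervalIntegral.integral_of_le hc.le]
            have h5 : ∀ t : ℝ, (s/c * t)^n = (s/c)^n * t^n := fun t => mul_pow _ _ _
            simp_rw [h5]
            rw [intervalIntegral.integral_const_mul, integral_pow]
            rw [zero_pow (by omega), sub_zero]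
            rw [div_pow, pow_succ]
            field_simp
    have hp2 : (∫⁻ t in Ioc c 1, ENNReal.ofReal (g t ^ n)) ≤
        ENNReal.ofReal (s^(n+2)/(((n:ℝ)+2)*c)) := by
      calc (∫⁻ t in Ioc c 1, ENNReal.ofReal (g t ^ n))
          ≤ ∫⁻ t in Ioc c 1, ENNReal.ofReal (1/c * (t * Real.sqrt (1 - t^2) ^ n)) := by
            apply setLIntegral_mono
            · apply Measurable.ennreal_ofReal
              apply Measurable.const_mul
              exact (continuous_id.mul ((Real.continuous_sqrt.comp
                (continuous_const.sub (continuous_pow 2))).pow n)).measurable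
            intro t ⟨htc, ht1⟩
            apply ENNReal.ofReal_le_ofReal
            have ht0 : 0 < t := hc.trans htc
            have h5 : g t ≤ Real.sqrt (1 - t^2) := by rw [hgdef]; exact min_le_right _ _
            calc g t ^ n ≤ Real.sqrt (1 - t^2) ^ n :=
                pow_le_pow_left₀ (hgnonneg t ⟨ht0.le, ht1⟩) h5 n
            _ ≤ t/c * Real.sqrt (1 - t^2) ^ n := by
                apply le_mul_of_one_le_left (by positivity)
                rw [le_div_iff₀ hc]
                linarith
            _ = 1/c * (t * Real.sqrt (1 - t^2) ^ n) := by ring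
        _ = ENNReal.ofReal (∫ t in Ioc c 1, 1/c * (t * Real.sqrt (1 - t^2) ^ n)) := by
            rw [← MeasureTheory.ofReal_integral_eq_lintegral_ofReal]
            · apply Continuous.integrableOn_Ioc
              continuity
            · apply (ae_restrict_mem measurableSet_Ioc).mono
              intro t ⟨htc, ht1⟩
              have ht0 : 0 < t := hc.trans htc
              positivity
        _ = ENNReal.ofReal (s^(n+2)/(((n:ℝ)+2)*c)) := by
            congr 1
            rw [← intervalIntegral.integral_of_le hc1.le,
              intervalIntegral.integral_const_mul, hftc]
            field_simp
    calc (∫⁻ t in Icc (0:ℝ) c, ENNReal.ofReal (g t ^ n)) +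
          (∫⁻ t in Ioc c 1, ENNReal.ofReal (g t ^ n))
        ≤ ENNReal.ofReal (s^n * c/((n:ℝ)+1)) + ENNReal.ofReal (s^(n+2)/(((n:ℝ)+2)*c)) :=
          add_le_add hp1 hp2
      _ = ENNReal.ofReal (s^n * c/((n:ℝ)+1) + s^(n+2)/(((n:ℝ)+2)*c)) := by
          rw [← ENNReal.ofReal_add (by positivity) (by positivity)]
  calc volume {x : Euc (n+1) | 0 < ‖x‖ ∧ ‖x‖ < 1 ∧ c * ‖x‖ ≤ x 0}
      ≤ volume (F ⁻¹' T) := measure_mono hsub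
    _ = volume T := hF.measure_preimage hTmeas.nullMeasurableSet
    _ = (∫⁻ t in Icc (0:ℝ) 1, ENNReal.ofReal (g t ^ n)) * Bn := hvolT
    _ ≤ ENNReal.ofReal (s^n * c/((n:ℝ)+1) + s^(n+2)/(((n:ℝ)+2)*c)) * Bn :=
        mul_le_mul_left hbound Bn

private lemma BW_gamma_add_half_le (x : ℝ) (hx : 0 < x) :
    Real.Gamma (x + 1/2) ≤ Real.sqrt x * Real.Gamma x := by
  have h := Real.convexOn_log_Gamma.2 (mem_Ioi.2 hx) (mem_Ioi.2 (by linarith : (0:ℝ) < x + 1))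
      (by norm_num : (0:ℝ) ≤ 1/2) (by norm_num : (0:ℝ) ≤ 1/2) (by norm_num)
  simp only [smul_eq_mul, Function.comp] at h
  have hxe : (1/2 : ℝ) * x + (1/2) * (x+1) = x + 1/2 := by ring
  rw [hxe] at h
  have hG : Real.Gamma (x+1) = x * Real.Gamma x := Real.Gamma_add_one hx.ne'
  have hGpos : 0 < Real.Gamma x := Real.Gamma_pos_of_pos hx
  have hGpos2 : 0 < Real.Gamma (x+1/2) := Real.Gamma_pos_of_pos (by linarith)
  have hlog : Real.log (Real.Gamma (x+1/2)) ≤ Real.log (Real.sqrt x * Real.Gamma x) := by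
    rw [Real.log_mul (Real.sqrt_ne_zero'.2 hx) hGpos.ne', Real.log_sqrt hx.le]
    rw [hG, Real.log_mul hx.ne' hGpos.ne'] at h
    linarith
  exact (Real.log_le_log_iff hGpos2 (by positivity)).1 hlog

private lemma BW_final_ineq (n : ℕ) (hn : 1 ≤ n) (c s : ℝ) (hc : 0 < c) (hc1 : c < 1)
    (hs : 0 < s) (hcs : c^2 + s^2 = 1) :
    (s^n * c/((n:ℝ)+1) + s^(n+2)/(((n:ℝ)+2)*c)) * (Real.sqrt π ^ n / Real.Gamma ((n:ℝ)/2+1)) /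
      (Real.sqrt π ^ (n+1) / Real.Gamma (((n:ℝ)+1)/2+1)) < s^n/(Real.sqrt (2*π*n)*c) := by
  set N : ℝ := (n : ℝ) with hN
  have hN1 : 1 ≤ N := by exact_mod_cast Nat.one_le_cast.2 hn
  have hπ : 0 < π := Real.pi_pos
  have hsπ : 0 < Real.sqrt π := Real.sqrt_pos.2 hπ
  have hA : 0 < Real.Gamma (N/2+1) := Real.Gamma_pos_of_pos (by linarith)
  have hB : 0 < Real.Gamma ((N+1)/2+1) := Real.Gamma_pos_of_pos (by linarith)
  have hBA : Real.Gamma ((N+1)/2+1) ≤ Real.sqrt (N/2+1) * Real.Gamma (N/2+1) := by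
    have h0 := BW_gamma_add_half_le (N/2+1) (by linarith)
    have harg : N/2+1 + 1/2 = (N+1)/2+1 := by ring
    rw [harg] at h0
    exact h0
  set J : ℝ := c/(N+1) + s^2/((N+2)*c) with hJ
  have hJpos : 0 < J := by positivity
  have hq : Real.sqrt (N*(N+2)) < N + 1 := by
    rw [Real.sqrt_lt' (by linarith)]
    nlinarith
  have hqpos : 0 ≤ Real.sqrt (N*(N+2)) := Real.sqrt_nonneg _
  have hne1 : N + 1 ≠ 0 := by linarith
  have hne2 : N + 2 ≠ 0 := by linarith
  have hJc : J * c = c^2/(N+1) + s^2/(N+2) := by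
    rw [hJ]
    field_simp
  have hJcle : J * c ≤ 1/(N+1) := by
    rw [hJc, div_add_div _ _ hne1 hne2,
      div_le_div_iff₀ (by positivity) (by linarith)]
    have hprod : (c^2 + s^2) * ((N+1)*(N+2)) = 1 * ((N+1)*(N+2)) := by rw [hcs]
    nlinarith [hprod, mul_nonneg (sq_nonneg s) (by linarith : (0:ℝ) ≤ N+1)]
  have hkey : J * c * Real.sqrt (N*(N+2)) < 1 := by
    calc J * c * Real.sqrt (N*(N+2)) < J * c * (N+1) :=
          (mul_lt_mul_iff_right₀ (by positivity)).2 hq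
    _ ≤ (1/(N+1)) * (N+1) := mul_le_mul_of_nonneg_right hJcle (by linarith)
    _ = 1 := by field_simp
  have hsqrtprod : Real.sqrt (N/2+1) * Real.sqrt (2*π*N) = Real.sqrt π * Real.sqrt (N*(N+2)) := by
    rw [← Real.sqrt_mul (by linarith : (0:ℝ) ≤ N/2+1), ← Real.sqrt_mul hπ.le]
    congr 1
    ring
  have h2πN : 0 < Real.sqrt (2*π*N) := Real.sqrt_pos.2 (by positivity)
  have hI : s^n * c/(N+1) + s^(n+2)/((N+2)*c) = s^n * J := by
    rw [hJ, pow_add]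
    field_simp
  rw [hI]
  have hLHS : s^n * J * (Real.sqrt π ^ n / Real.Gamma (N/2+1)) /
      (Real.sqrt π ^ (n+1) / Real.Gamma ((N+1)/2+1)) =
      s^n * J * Real.Gamma ((N+1)/2+1) / (Real.sqrt π * Real.Gamma (N/2+1)) := by
    rw [pow_succ]
    field_simp
  rw [hLHS, div_lt_div_iff₀ (by positivity) (by positivity)]
  calc s^n * J * Real.Gamma ((N+1)/2+1) * (Real.sqrt (2*π*N) * c)
      ≤ s^n * J * (Real.sqrt (N/2+1) * Real.Gamma (N/2+1)) * (Real.sqrt (2*π*N) * c) := by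
        apply mul_le_mul_of_nonneg_right _ (by positivity)
        apply mul_le_mul_of_nonneg_left hBA (by positivity)
    _ = (s^n * (Real.sqrt π * Real.Gamma (N/2+1))) * (J * c * Real.sqrt (N*(N+2))) := by
        linear_combination (s^n * J * Real.Gamma (N/2+1) * c) * hsqrtprod
    _ < (s^n * (Real.sqrt π * Real.Gamma (N/2+1))) * 1 :=
        (mul_lt_mul_iff_right₀ (by positivity)).2 hkey
    _ = s^n * (Real.sqrt π * Real.Gamma (N/2+1)) := mul_one _

/-- **Böröczky–Wintsche, upper cap bound.** If `φ ≤ arccos (1/√(n+1))` then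
`Ω_n(φ) < sinⁿ φ / (√(2πn) · cos φ)`. -/
theorem omega_lt (n : ℕ) (hn : 1 ≤ n) (φ : ℝ) (hφ0 : 0 < φ) (hφ1 : φ < π / 2)
    (hφ2 : φ ≤ Real.arccos (1 / Real.sqrt (n + 1))) :
    Omega n φ < Real.sin φ ^ n / (Real.sqrt (2 * π * n) * Real.cos φ) := by
  have hπ : 0 < π := Real.pi_pos
  set c : ℝ := Real.cos φ with hcdef
  set s : ℝ := Real.sin φ with hsdef
  have hc : 0 < c := Real.cos_pos_of_mem_Ioo ⟨by linarith, hφ1⟩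
  have hs : 0 < s := Real.sin_pos_of_pos_of_lt_pi hφ0 (by linarith)
  have hcs : c^2 + s^2 = 1 := by
    have := Real.sin_sq_add_cos_sq φ
    linarith
  have hc1 : c < 1 := by
    nlinarith
  -- the cap as a measurable set
  set cap : Set ↥(Metric.sphere (0 : Euc (n+1)) 1) :=
    {v | InnerProductGeometry.angle (v : Euc (n+1)) (EuclideanSpace.single 0 1) ≤ φ} with hcapdef
  have hcap : cap = Subtype.val ⁻¹' {x : Euc (n+1) | c ≤ x 0} := by
    ext v
    exact BW_angle_iff φ hφ0 hφ1 (v : Euc (n+1)) (mem_sphere_zero_iff_norm.1 v.2)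
  have hmeas : MeasurableSet cap := by
    rw [hcap]
    exact ((isClosed_le continuous_const
      (EuclideanSpace.proj (0 : Fin (n+1))).continuous).measurableSet).preimage
      measurable_subtype_coe
  have himage : Subtype.val '' cap =
      Metric.sphere (0 : Euc (n+1)) 1 ∩ {x : Euc (n+1) | c ≤ x 0} := by
    rw [hcap, Subtype.image_preimage_coe]
  set S : Set (Euc (n+1)) := {x | 0 < ‖x‖ ∧ ‖x‖ < 1 ∧ c * ‖x‖ ≤ x 0} with hSdef
  set vS : ENNReal := volume S with hvSdef
  set vB : ENNReal := volume (Metric.ball (0 : Euc (n+1)) 1) with hvBdef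
  set Bn : ENNReal := volume (Metric.ball (0 : Euc n) 1) with hBndef
  set D : ENNReal := ((Module.finrank ℝ (Euc (n+1)) : ℕ) : ENNReal) with hDdef
  have hD0 : D ≠ 0 := by
    rw [hDdef, finrank_euclideanSpace_fin]
    simp
  have hDtop : D ≠ ⊤ := ENNReal.natCast_ne_top _
  have hvB0 : vB ≠ 0 := (measure_ball_pos _ _ one_pos).ne'
  have hvBtop : vB ≠ ⊤ := measure_ball_lt_top.ne
  have htoScap : volume.toSphere cap = D * vS := by
    rw [Measure.toSphere_apply' _ hmeas, himage, BW_cone_eq c hc]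
  have htoSuniv : volume.toSphere (univ : Set ↥(Metric.sphere (0 : Euc (n+1)) 1)) = D * vB :=
    Measure.toSphere_apply_univ _
  have hΩ : Omega n φ = vS.toReal / vB.toReal := by
    unfold Omega sphereHaar
    rw [Measure.smul_apply, smul_eq_mul]
    have hset : {v : ↥(Metric.sphere (0 : Euc (n+1)) 1) |
        InnerProductGeometry.angle (v : Euc (n+1)) (EuclideanSpace.single 0 1) ≤ φ} = cap := rfl
    rw [hset, htoScap, htoSuniv, ENNReal.mul_inv (Or.inl hD0) (Or.inl hDtop),
      mul_mul_mul_comm, ENNReal.inv_mul_cancel hD0 hDtop, one_mul,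
      ← ENNReal.div_eq_inv_mul, ENNReal.toReal_div]
  -- numeric values of ball volumes
  haveI : Nonempty (Fin n) := ⟨⟨0, hn⟩⟩
  have hGA : 0 < Real.Gamma ((n:ℝ)/2+1) := Real.Gamma_pos_of_pos (by positivity)
  have hGB : 0 < Real.Gamma (((n:ℝ)+1)/2+1) := Real.Gamma_pos_of_pos (by positivity)
  have hBnval : Bn.toReal = Real.sqrt π ^ n / Real.Gamma ((n:ℝ)/2+1) := by
    rw [hBndef, EuclideanSpace.volume_ball]
    simp only [Fintype.card_fin, ENNReal.ofReal_one, one_pow, one_mul]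
    exact ENNReal.toReal_ofReal (by positivity)
  have hvBval : vB.toReal = Real.sqrt π ^ (n+1) / Real.Gamma (((n:ℝ)+1)/2+1) := by
    rw [hvBdef, EuclideanSpace.volume_ball]
    simp only [Fintype.card_fin, ENNReal.ofReal_one, one_pow, one_mul]
    rw [Nat.cast_add, Nat.cast_one]
    exact ENNReal.toReal_ofReal (by positivity)
  have hvBpos : 0 < vB.toReal := by
    rw [hvBval]
    positivity
  -- volume bound
  set I : ℝ := s^n * c/((n:ℝ)+1) + s^(n+2)/(((n:ℝ)+2)*c) with hIdef
  have hI0 : 0 ≤ I := by positivity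
  have hvSle : vS.toReal ≤ I * Bn.toReal := by
    have h1 : vS ≤ ENNReal.ofReal I * Bn := BW_volS_le c s hc hc1 hs hcs
    have h2 : ENNReal.ofReal I * Bn ≠ ⊤ :=
      ENNReal.mul_ne_top ENNReal.ofReal_ne_top measure_ball_lt_top.ne
    have h3 := ENNReal.toReal_mono h2 h1
    rwa [ENNReal.toReal_mul, ENNReal.toReal_ofReal hI0] at h3
  calc Omega n φ = vS.toReal / vB.toReal := hΩ
    _ ≤ (I * Bn.toReal) / vB.toReal := by
        exact div_le_div_of_nonneg_right hvSle hvBpos.le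
    _ < s^n / (Real.sqrt (2*π*n) * c) := by
        rw [hBnval, hvBval]
        exact BW_final_ineq n hn c s hc hc1 hs hcs
end
end

section
/- Let K be a convex body in ℝ^n with (1/D)·B^n ⊆ K ⊆ B^n for some D > 1, and let α = arcsin(1/D). Suppose A ⊆ S^{n-1} is a finite set of directions such that the open spherical caps of angular radius α centered at the points of A cover S^{n-1} (equivalently, A meets every open spherical cap of radius α). Then A illuminates K, i.e., every boundary point of K is illuminated by some direction in A; hence i(K) ≤ |A|. -/
open Set Metric MeasureTheory ProbabilityTheory InnerProductGeometry Real


noncomputable section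

/-- If `(1/D)·Bⁿ ⊆ K ⊆ Bⁿ`, `α = arcsin (1/D)`, and `A ⊆ S^{n-1}` is a finite set meeting
every open spherical cap of radius `α` (equivalently, the open caps of radius `α` centered
at points of `A` cover the sphere), then `A` illuminates `K`; hence `i(K) ≤ |A|`. -/
theorem illuminatedBy_of_cap_cover {n : ℕ} (D : ℝ) (hD : 1 < D) (K : Set (Euc n))
    (hKcomp : IsCompact K) (hKconv : Convex ℝ K) (hKint : (interior K).Nonempty)
    (hK1 : Metric.closedBall (0 : Euc n) (1 / D) ⊆ K)
    (hK2 : K ⊆ Metric.closedBall (0 : Euc n) 1)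
    (A : Finset (Euc n)) (hA : (A : Set (Euc n)) ⊆ Metric.sphere (0 : Euc n) 1)
    (hcover : ∀ v ∈ Metric.sphere (0 : Euc n) 1, ∃ a ∈ A,
      InnerProductGeometry.angle a v < Real.arcsin (1 / D)) :
    IlluminatedBy K (A : Set (Euc n)) ∧ illumNumber K ≤ A.card := by
  have hD0 : (0 : ℝ) < 1 / D := by positivity
  have hD1 : 1 / D < 1 := by
    rw [div_lt_one (by linarith)]; linarith
  have hball : Metric.ball (0 : Euc n) (1 / D) ⊆ interior K := by
    calc Metric.ball (0 : Euc n) (1 / D)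
        = interior (Metric.closedBall (0 : Euc n) (1 / D)) :=
          (interior_closedBall _ hD0.ne').symm
      _ ⊆ interior K := interior_mono hK1
  have hIll : IlluminatedBy K (A : Set (Euc n)) := by
    intro b hb
    have hbK : b ∈ K := by
      have := frontier_subset_closure hb
      rwa [hKcomp.isClosed.closure_eq] at this
    have hbni : b ∉ interior K := by
      rw [hKcomp.isClosed.frontier_eq] at hb
      exact hb.2
    have hbne : b ≠ 0 := by
      rintro rfl
      exact hbni (hball (Metric.mem_ball_self hD0))
    have hbpos : 0 < ‖b‖ := norm_pos_iff.mpr hbne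
    have hbnorm : ‖b‖ ≤ 1 := mem_closedBall_zero_iff.mp (hK2 hbK)
    set v : Euc n := -(‖b‖⁻¹ • b) with hv_def
    have hv : ‖v‖ = 1 := by
      rw [hv_def, norm_neg, norm_smul, norm_inv, norm_norm]
      field_simp
    obtain ⟨a, haA, hang⟩ := hcover v (mem_sphere_zero_iff_norm.mpr hv)
    have ha1 : ‖a‖ = 1 := mem_sphere_zero_iff_norm.mp (hA haA)
    set θ := InnerProductGeometry.angle a v with hθ_def
    have hθ0 : 0 ≤ θ := InnerProductGeometry.angle_nonneg a v
    have hαlt : Real.arcsin (1 / D) < π / 2 := Real.arcsin_lt_pi_div_two.mpr hD1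
    have hθπ : θ < π / 2 := hang.trans hαlt
    have hc : 0 < Real.cos θ :=
      Real.cos_pos_of_mem_Ioo ⟨by linarith [Real.pi_pos], hθπ⟩
    have hs : Real.sin θ < 1 / D := by
      have hmono := Real.strictMonoOn_sin
        (a := θ) (b := Real.arcsin (1 / D))
        ⟨by linarith [Real.pi_pos], hθπ.le⟩
        ⟨Real.neg_pi_div_two_le_arcsin _, Real.arcsin_le_pi_div_two _⟩ hang
      rwa [Real.sin_arcsin (by linarith) (by linarith)] at hmono
    have hsnn : 0 ≤ Real.sin θ :=
      Real.sin_nonneg_of_nonneg_of_le_pi hθ0 (by linarith [Real.pi_pos])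
    have hcos_eq : Real.cos θ = (inner ℝ a v : ℝ) := by
      rw [hθ_def, InnerProductGeometry.cos_angle, ha1, hv]
      simp
    have hinner_ab : (inner ℝ a b : ℝ) = -(‖b‖ * Real.cos θ) := by
      have h1 : (inner ℝ a v : ℝ) = -(‖b‖⁻¹ * inner ℝ a b) := by
        rw [hv_def, inner_neg_right, real_inner_smul_right]
      rw [hcos_eq, h1]
      field_simp
    set lam := ‖b‖ * Real.cos θ with hlam_def
    have hlam : 0 < lam := mul_pos hbpos hc
    have hkey : ‖b + lam • a‖ ^ 2 = ‖b‖ ^ 2 * Real.sin θ ^ 2 := by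
      have hba : (inner ℝ b a : ℝ) = -lam := by
        rw [real_inner_comm, hinner_ab, hlam_def]
      rw [norm_add_sq_real, real_inner_smul_right, hba, norm_smul, ha1,
        Real.norm_eq_abs, abs_of_pos hlam]
      have hsq : Real.sin θ ^ 2 = 1 - Real.cos θ ^ 2 := Real.sin_sq θ
      rw [hsq, hlam_def]
      ring
    have hlt : ‖b + lam • a‖ < 1 / D := by
      refine lt_of_pow_lt_pow_left₀ 2 hD0.le ?_
      rw [hkey]
      nlinarith [mul_self_lt_mul_self hsnn hs, mul_self_nonneg (Real.sin θ), mul_self_le_mul_self hbpos.le hbnorm]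
    refine ⟨a, haA, lam, hlam, hball (mem_ball_zero_iff.mpr hlt)⟩
  exact ⟨hIll, Nat.sInf_le ⟨A, hA, hIll, rfl⟩⟩
end
end

section
/- Every smooth convex body K in ℝ^n (i.e., a convex body having a unique supporting hyperplane at each of its boundary points) can be illuminated by n + 1 directions; that is, i(K) ≤ n + 1. -/
open Set Metric MeasureTheory ProbabilityTheory InnerProductGeometry Real
open scoped InnerProductSpace

noncomputable section

/-- A convex set with nonempty interior is contained in the closure of its interior. -/
lemma subset_closure_interior_of_convex {n : ℕ} {K : Set (Euc n)} (hKconv : Convex ℝ K)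
    (hKint : (interior K).Nonempty) : K ⊆ closure (interior K) := by
  obtain ⟨a₀, ha₀⟩ := hKint
  intro x hx
  have h1 : Filter.Tendsto (fun k : ℕ => (1:ℝ)/(k+1)) Filter.atTop (nhds 0) :=
    tendsto_one_div_add_atTop_nhds_zero_nat
  have ht : Filter.Tendsto (fun k : ℕ => (1 - (1:ℝ)/(k+1)) • x + ((1:ℝ)/(k+1)) • a₀)
      Filter.atTop (nhds x) := by
    have hA := ((tendsto_const_nhds (x := (1:ℝ)) (f := (Filter.atTop : Filter ℕ))).sub
      h1).smul_const x
    have hB := h1.smul_const a₀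
    simpa using hA.add hB
  refine mem_closure_of_tendsto ht (Filter.Eventually.of_forall fun k => ?_)
  have hk : (0:ℝ) < 1/(k+1) := by positivity
  have hk1 : (1:ℝ)/(k+1) ≤ 1 := by
    rw [div_le_one (by positivity)]
    linarith [Nat.cast_nonneg (α := ℝ) k]
  exact hKconv.combo_closure_interior_mem_interior (subset_closure hx) ha₀
    (by linarith) hk (by ring)

/-- If `u` has negative inner product with the (unique) outer unit normal at `b`,
then `u` illuminates `K` at `b`. -/
lemma illuminates_of_inner_neg {n : ℕ} {K : Set (Euc n)} (hKcomp : IsCompact K)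
    (hKconv : Convex ℝ K) (hKint : (interior K).Nonempty) {b ν u : Euc n}
    (hb : b ∈ frontier K) (hν1 : ‖ν‖ = 1) (hν2 : ∀ x ∈ K, ⟪x, ν⟫_ℝ ≤ ⟪b, ν⟫_ℝ)
    (huniq : ∀ y : Euc n, (‖y‖ = 1 ∧ ∀ x ∈ K, ⟪x, y⟫_ℝ ≤ ⟪b, y⟫_ℝ) → y = ν)
    (hu : ⟪u, ν⟫_ℝ < 0) : Illuminates K u b := by
  by_contra hcon
  rw [Illuminates] at hcon
  push_neg at hcon
  have hbK : b ∈ K := hKcomp.isClosed.frontier_subset hb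
  set lam : ℕ → ℝ := fun k => 1/(k+1) with hlamdef
  have hlam : ∀ k, 0 < lam k := fun k => by positivity
  have hlam0 : Filter.Tendsto lam Filter.atTop (nhds 0) :=
    tendsto_one_div_add_atTop_nhds_zero_nat
  have hsep : ∀ k : ℕ, ∃ w : Euc n, ‖w‖ = 1 ∧ 0 ≤ ⟪u, w⟫_ℝ ∧
      ∀ x ∈ K, ⟪x, w⟫_ℝ ≤ ⟪b, w⟫_ℝ + lam k * ⟪u, w⟫_ℝ := by
    intro k
    obtain ⟨f, hf⟩ := geometric_hahn_banach_open_point hKconv.interior isOpen_interior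
      (hcon (lam k) (hlam k))
    have hKf : ∀ x ∈ K, f x ≤ f (b + lam k • u) := by
      intro x hx
      have hcl : closure (interior K) ⊆ {y | f y ≤ f (b + lam k • u)} :=
        closure_minimal (fun y hy => (hf y hy).le)
          (isClosed_le f.continuous continuous_const)
      exact hcl (subset_closure_interior_of_convex hKconv hKint hx)
    have hfu : 0 ≤ f u := by
      have := hKf b hbK
      rw [map_add, f.map_smul, smul_eq_mul] at this
      have h2 : 0 ≤ lam k * f u := by linarith
      exact nonneg_of_mul_nonneg_right h2 (hlam k)
    set v := (InnerProductSpace.toDual ℝ (Euc n)).symm f with hvdef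
    have hfv : ∀ y, ⟪y, v⟫_ℝ = f y := fun y => by
      rw [real_inner_comm]; exact InnerProductSpace.toDual_symm_apply
    have hv0 : v ≠ 0 := by
      obtain ⟨a₀, ha₀⟩ := hKint
      intro h
      have := hf a₀ ha₀
      rw [← hfv a₀, ← hfv _, h, inner_zero_right, inner_zero_right] at this
      exact lt_irrefl _ this
    have hnv : 0 < ‖v‖ := norm_pos_iff.mpr hv0
    refine ⟨‖v‖⁻¹ • v, ?_, ?_, ?_⟩
    · rw [norm_smul, norm_inv, norm_norm, inv_mul_cancel₀ hnv.ne']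
    · rw [real_inner_smul_right, hfv]
      positivity
    · intro x hx
      rw [real_inner_smul_right, real_inner_smul_right, real_inner_smul_right,
        hfv, hfv, hfv]
      have := hKf x hx
      rw [map_add, f.map_smul, smul_eq_mul] at this
      have hpos : (0:ℝ) ≤ ‖v‖⁻¹ := by positivity
      calc ‖v‖⁻¹ * f x ≤ ‖v‖⁻¹ * (f b + lam k * f u) :=
            mul_le_mul_of_nonneg_left this hpos
        _ = ‖v‖⁻¹ * f b + lam k * (‖v‖⁻¹ * f u) := by ring
  choose w hw1 hw2 hw3 using hsep
  have hsph : ∀ k, w k ∈ Metric.sphere (0 : Euc n) 1 := fun k => by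
    simpa [mem_sphere_zero_iff_norm] using hw1 k
  obtain ⟨ν', hν'mem, φ, hφ, hφt⟩ :=
    (isCompact_sphere (0 : Euc n) 1).tendsto_subseq hsph
  have hν'1 : ‖ν'‖ = 1 := mem_sphere_zero_iff_norm.mp hν'mem
  have hlamφ : Filter.Tendsto (fun k => lam (φ k)) Filter.atTop (nhds 0) :=
    hlam0.comp hφ.tendsto_atTop
  have hinner : ∀ y : Euc n,
      Filter.Tendsto (fun k => ⟪y, w (φ k)⟫_ℝ) Filter.atTop (nhds ⟪y, ν'⟫_ℝ) :=
    fun y => Filter.Tendsto.inner tendsto_const_nhds hφt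
  have h2 : ∀ x ∈ K, ⟪x, ν'⟫_ℝ ≤ ⟪b, ν'⟫_ℝ := by
    intro x hx
    have hrhs : Filter.Tendsto (fun k => ⟪b, w (φ k)⟫_ℝ + lam (φ k) * ⟪u, w (φ k)⟫_ℝ)
        Filter.atTop (nhds ⟪b, ν'⟫_ℝ) := by
      have := (hinner b).add (hlamφ.mul (hinner u))
      simpa using this
    exact le_of_tendsto_of_tendsto' (hinner x) hrhs fun k => hw3 (φ k) x hx
  have h3 : 0 ≤ ⟪u, ν'⟫_ℝ := ge_of_tendsto' (hinner u) (fun k => hw2 (φ k))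
  have : ν' = ν := huniq ν' ⟨hν'1, h2⟩
  rw [this] at h3
  exact absurd hu (not_lt.mpr h3)

/-- In dimension `n ≥ 1` there are at most `n + 1` unit directions such that every nonzero
vector has negative inner product with at least one of them. -/
lemma exists_directions (n : ℕ) (hn : 0 < n) : ∃ A : Finset (Euc n),
    (A : Set (Euc n)) ⊆ Metric.sphere (0 : Euc n) 1 ∧ A.card ≤ n + 1 ∧
    ∀ ν : Euc n, ν ≠ 0 → ∃ u ∈ A, ⟪u, ν⟫_ℝ < 0 := by
  classical
  set e : Fin n → Euc n := fun i => EuclideanSpace.single i (1:ℝ) with hedef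
  set s : Euc n := ∑ i, e i with hsdef
  have hinner_e : ∀ (i : Fin n) (y : Euc n), ⟪e i, y⟫_ℝ = y i := by
    intro i y
    simp [hedef, EuclideanSpace.inner_single_left]
  have hinner_s : ∀ y : Euc n, ⟪s, y⟫_ℝ = ∑ i, y i := by
    intro y
    rw [hsdef, sum_inner]
    exact Finset.sum_congr rfl fun i _ => hinner_e i y
  have i0 : Fin n := ⟨0, hn⟩
  have hs0 : s ≠ 0 := by
    intro h
    have h1 : ⟪s, e i0⟫_ℝ = 1 := by
      rw [hinner_s]
      simp [hedef, EuclideanSpace.single_apply]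
    rw [h, inner_zero_left] at h1
    norm_num at h1
  have hns : 0 < ‖s‖ := norm_pos_iff.mpr hs0
  set v : Euc n := -(‖s‖⁻¹ • s) with hvdef
  have hnv : ‖v‖ = 1 := by
    rw [hvdef, norm_neg, norm_smul, norm_inv, norm_norm, inv_mul_cancel₀ hns.ne']
  have hinner_v : ∀ y : Euc n, ⟪v, y⟫_ℝ = -(‖s‖⁻¹ * ∑ i, y i) := by
    intro y
    rw [hvdef, inner_neg_left, real_inner_smul_left, hinner_s]
  refine ⟨Finset.image e Finset.univ ∪ {v}, ?_, ?_, ?_⟩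
  · intro u hu
    rw [Finset.coe_union, Set.mem_union] at hu
    rw [mem_sphere_zero_iff_norm]
    rcases hu with hu | hu
    · simp only [Finset.coe_image, Set.mem_image] at hu
      obtain ⟨i, -, rfl⟩ := hu
      simp [hedef]
    · simp only [Finset.coe_singleton, Set.mem_singleton_iff] at hu
      rw [hu, hnv]
  · calc (Finset.image e Finset.univ ∪ {v}).card
        ≤ (Finset.image e Finset.univ).card + ({v} : Finset (Euc n)).card :=
          Finset.card_union_le _ _
      _ ≤ n + 1 := by
          have := Finset.card_image_le (f := e) (s := Finset.univ)
          simp only [Finset.card_univ, Fintype.card_fin, Finset.card_singleton] at *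
          omega
  · intro ν hν
    by_contra hcon
    push_neg at hcon
    have hei : ∀ i : Fin n, 0 ≤ ν i := by
      intro i
      have := hcon (e i) (by simp [Finset.mem_union])
      rwa [hinner_e] at this
    have hv : 0 ≤ ⟪v, ν⟫_ℝ := hcon v (by simp [Finset.mem_union])
    rw [hinner_v] at hv
    have hsum : (∑ i, ν i) ≤ 0 := by
      by_contra hpos
      push_neg at hpos
      have : 0 < ‖s‖⁻¹ * ∑ i, ν i := by positivity
      linarith
    have hzero : ∀ i : Fin n, ν i = 0 := by
      intro i
      have hsum0 : (∑ i, ν i) = 0 := le_antisymm hsum (by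
        simpa using Finset.sum_nonneg fun j _ => hei j)
      exact (Finset.sum_eq_zero_iff_of_nonneg fun j _ => hei j).mp hsum0 i (Finset.mem_univ i)
    apply hν
    ext i
    exact hzero i

/-- Every smooth convex body (unique supporting hyperplane, i.e. unique outer unit normal,
at each boundary point) in `ℝ^n` can be illuminated by `n + 1` directions. -/
theorem illumNumber_le_of_smooth {n : ℕ} (K : Set (Euc n))
    (hKcomp : IsCompact K) (hKconv : Convex ℝ K) (hKint : (interior K).Nonempty)
    (hsmooth : ∀ b ∈ frontier K, ∃! u : Euc n, ‖u‖ = 1 ∧ ∀ x ∈ K, ⟪x, u⟫_ℝ ≤ ⟪b, u⟫_ℝ) :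
    illumNumber K ≤ n + 1 := by
  rcases Nat.eq_zero_or_pos n with hn | hn
  · subst hn
    have hfr : IlluminatedBy K ((∅ : Finset (Euc 0)) : Set (Euc 0)) := by
      intro b hb
      obtain ⟨u, ⟨hu1, -⟩, -⟩ := hsmooth b hb
      have hu0 : u = 0 := Subsingleton.elim u 0
      rw [hu0, norm_zero] at hu1
      norm_num at hu1
    have hmem : 0 ∈ {m | ∃ A : Finset (Euc 0), (A : Set (Euc 0)) ⊆ Metric.sphere (0 : Euc 0) 1 ∧
        IlluminatedBy K (A : Set (Euc 0)) ∧ A.card = m} :=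
      ⟨∅, by simp, hfr, rfl⟩
    exact le_trans (Nat.sInf_le hmem) (by norm_num)
  · obtain ⟨A, hA1, hA2, hA3⟩ := exists_directions n hn
    have hill : IlluminatedBy K (A : Set (Euc n)) := by
      intro b hb
      obtain ⟨ν, ⟨hν1, hν2⟩, huniq⟩ := hsmooth b hb
      have hνne : ν ≠ 0 := fun h => by rw [h, norm_zero] at hν1; norm_num at hν1
      obtain ⟨u, huA, hu⟩ := hA3 ν hνne
      exact ⟨u, huA, illuminates_of_inner_neg hKcomp hKconv hKint hb hν1 hν2
        (fun y hy => huniq y hy) hu⟩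
    exact le_trans (Nat.sInf_le ⟨A, hA1, hill, rfl⟩) hA2
end
end

section
/- There exist n + 1 points on the sphere S^{n-1} (for example, the vertices of a regular simplex inscribed in S^{n-1}) with the property that every open hemisphere of S^{n-1} contains at least one of these points; here an open hemisphere is a set of the form {v ∈ S^{n-1} : ⟨v, w⟩ > 0} for some w ∈ S^{n-1}. -/
open Set Metric MeasureTheory ProbabilityTheory InnerProductGeometry Real
open scoped InnerProductSpace

noncomputable section

/-- There exist `n + 1` points on `S^{n-1}` (e.g. the vertices of a regular simplex) such
that every open hemisphere `{v : ⟪v, w⟫ > 0}` contains at least one of them. -/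
theorem exists_points_meeting_every_open_hemisphere (n : ℕ) (hn : 1 ≤ n) :
    ∃ f : Fin (n + 1) → Euc n,
      (∀ i, f i ∈ Metric.sphere (0 : Euc n) 1) ∧
      ∀ w ∈ Metric.sphere (0 : Euc n) 1, ∃ i, 0 < ⟪f i, w⟫_ℝ := by
  set v : Euc n := ∑ j, EuclideanSpace.single j (1 : ℝ) with hv
  have hvapp : ∀ k, v k = 1 := by
    intro k
    rw [hv]
    rw [show (∑ j, EuclideanSpace.single j (1:ℝ)) k = ∑ j, EuclideanSpace.single j (1:ℝ) k
      from by rw [WithLp.ofLp_sum]; exact Finset.sum_apply k Finset.univ _]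
    simp [EuclideanSpace.single_apply]
  have hnv : ‖v‖ = Real.sqrt n := by
    rw [EuclideanSpace.norm_eq]
    simp [hvapp]
  have hs : Real.sqrt n ≠ 0 := by
    positivity
  refine ⟨fun i => if h : (i : ℕ) < n then EuclideanSpace.single ⟨i, h⟩ 1
    else -(Real.sqrt n)⁻¹ • v, ?_, ?_⟩
  · intro i
    rw [mem_sphere_zero_iff_norm]
    by_cases h : (i : ℕ) < n
    · simp [h]
    · simp only [h, dif_neg, not_false_iff, norm_smul, hnv, norm_neg, norm_inv,
        Real.norm_eq_abs, abs_of_nonneg (Real.sqrt_nonneg _)]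
      field_simp
  · intro w hw
    rw [mem_sphere_zero_iff_norm] at hw
    have hw0 : w ≠ 0 := by intro h; rw [h] at hw; simp at hw
    by_cases hpos : ∃ k : Fin n, 0 < w k
    · obtain ⟨k, hk⟩ := hpos
      have hkn : (k : ℕ) < n := k.isLt
      refine ⟨⟨k, by omega⟩, ?_⟩
      have : ((⟨(k : ℕ), by omega⟩ : Fin (n+1)) : ℕ) < n := hkn
      simp only [this, dif_pos]
      rw [EuclideanSpace.inner_single_left]
      simpa using hk
    · push_neg at hpos
      refine ⟨⟨n, by omega⟩, ?_⟩
      have hnn : ¬ ((⟨n, by omega⟩ : Fin (n+1)) : ℕ) < n := by simp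
      simp only [hnn, dif_neg, not_false_iff]
      rw [inner_smul_left]
      have hinner : ⟪v, w⟫_ℝ = ∑ k, w k := by
        rw [hv, sum_inner]
        congr 1
        ext k
        rw [EuclideanSpace.inner_single_left]
        simp
      have hne : ∃ k, w k < 0 := by
        by_contra h
        push_neg at h
        apply hw0
        ext k
        exact le_antisymm (hpos k) (h k)
      obtain ⟨k, hk⟩ := hne
      have hsum : ∑ k, w k < 0 := by
        have h1 : ∑ j, w j = w k + ∑ j ∈ Finset.univ.erase k, w j :=
          (Finset.add_sum_erase _ _ (Finset.mem_univ k)).symm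
        have h2 : ∑ j ∈ Finset.univ.erase k, w j ≤ 0 :=
          Finset.sum_nonpos fun i _ => hpos i
        linarith
      simp only [hinner, RCLike.star_def, conj_trivial]
      have : 0 < (Real.sqrt n)⁻¹ := by
        have := Real.sqrt_pos.2 (by exact_mod_cast Nat.pos_of_ne_zero (by omega) : (0:ℝ) < n)
        positivity
      nlinarith
end
end
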